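/- For every integer k ≥ 2, there is an edge-colouring of the complete graph on 2(k−1)·(⌊n/2⌋ − 1) vertices with k colours containing no monochromatic path on n vertices; hence R_k(P_n) ≥ 2(k−1)(⌊n/2⌋ − 1) + 1. -/

import Mathlib

open SimpleGraph

/-- `H` contains a path on `n` vertices as a subgraph. -/
def ContainsPath {V : Type*} (H : SimpleGraph V) (n : ℕ) : Prop :=
  ∃ (u v : V) (p : H.Walk u v), p.IsPath ∧ p.support.length = n

private lemma chain'_imp_mem {α : Type*} {R Q : α → α → Prop} {l : List α}
    (h : l.Chain' R) (hq : ∀ x ∈ l, ∀ y ∈ l, R x y → Q x y) : l.Chain' Q := by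
  simp only [List.Chain', List.isChain_iff_getElem] at h ⊢
  intro i hi
  exact hq _ (List.getElem_mem _) _ (List.getElem_mem _) (h i hi)

private lemma chain_const_aux {α β : Type*} (P : α → β) :
    ∀ (a : α) (l : List α), List.Chain (fun x y => P x = P y) a l → ∀ x ∈ l, P x = P a
  | a, [], _, x, hx => by simp at hx
  | a, b :: t, h, x, hx => by
    simp only [List.Chain, List.isChain_cons_cons] at h
    rcases List.mem_cons.mp hx with rfl | hx'
    · exact h.1.symm
    · exact (chain_const_aux P b t h.2 x hx').trans h.1.symm

private lemma chain'_const {α β : Type*} (P : α → β) (l : List α)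
    (h : l.Chain' (fun x y => P x = P y)) : ∀ x ∈ l, ∀ y ∈ l, P x = P y := by
  cases l with
  | nil => intro x hx; simp at hx
  | cons a t =>
    have hc : List.Chain (fun x y => P x = P y) a t := h
    intro x hx y hy
    rcases List.mem_cons.mp hx with rfl | hx' <;> rcases List.mem_cons.mp hy with rfl | hy'
    · rfl
    · exact (chain_const_aux P _ _ hc y hy').symm
    · exact chain_const_aux P _ _ hc x hx'
    · exact (chain_const_aux P _ _ hc x hx').trans (chain_const_aux P _ _ hc y hy').symm

private lemma chain'_two_bound {α : Type*} [DecidableEq α] (S : Finset α) :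
    ∀ (l : List α), l.Nodup → l.Chain' (fun x y => x ∈ S ∨ y ∈ S) →
      l.length ≤ 2 * (l.toFinset ∩ S).card + 1
  | [], _, _ => by simp
  | [a], _, _ => by simp
  | a :: b :: t, hnd, hch => by
    have hR : a ∈ S ∨ b ∈ S := (List.isChain_cons_cons.mp hch).1
    have hch' : t.Chain' (fun x y => x ∈ S ∨ y ∈ S) := (List.isChain_cons_cons.mp hch).2.tail
    have hnd' : t.Nodup := (hnd.of_cons).of_cons
    have hat : a ∉ t := fun h => (List.nodup_cons.mp hnd).1 (List.mem_cons_of_mem _ h)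
    have hbt : b ∉ t := (List.nodup_cons.mp (hnd.of_cons)).1
    have IH := chain'_two_bound S t hnd' hch'
    set c : α := if a ∈ S then a else b with hc
    have hcS : c ∈ S := by rw [hc]; split_ifs with h; exacts [h, hR.resolve_left h]
    have hct : c ∉ t := by rw [hc]; split_ifs; exacts [hat, hbt]
    have hcmem : c ∈ (a :: b :: t).toFinset := by
      rw [hc]; split_ifs <;> simp
    have hsub : insert c (t.toFinset ∩ S) ⊆ (a :: b :: t).toFinset ∩ S := by
      intro x hx
      rcases Finset.mem_insert.mp hx with rfl | hx'
      · exact Finset.mem_inter.mpr ⟨hcmem, hcS⟩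
      · have := Finset.mem_inter.mp hx'
        exact Finset.mem_inter.mpr ⟨by simp at this ⊢; tauto, this.2⟩
    have hcn : c ∉ t.toFinset ∩ S := fun h => hct (List.mem_toFinset.mp (Finset.mem_inter.mp h).1)
    have hcard : (t.toFinset ∩ S).card + 1 ≤ ((a :: b :: t).toFinset ∩ S).card := by
      rw [← Finset.card_insert_of_notMem hcn]
      exact Finset.card_le_card hsub
    simp only [List.length_cons]
    omega


private lemma no_mono_path (k n : ℕ) (hk : 2 ≤ k) :
    ∃ f : Sym2 (Fin (2 * (k - 1) * (n / 2 - 1))) → Fin k,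
      ∀ i : Fin k, ¬ ContainsPath (SimpleGraph.fromRel (fun u v => f s(u, v) = i)) n := by
  by_cases hn : n ≤ 3
  · have h0 : 2 * (k - 1) * (n / 2 - 1) = 0 := by
      have : n / 2 - 1 = 0 := by omega
      rw [this, Nat.mul_zero]
    refine ⟨fun _ => ⟨0, by omega⟩, ?_⟩
    rintro i ⟨u, v, p, hp, hlen⟩
    have := u.isLt
    omega
  push_neg at hn
  set m := k - 1 with hm
  set s := n / 2 - 1 with hs
  have hm1 : 1 ≤ m := by omega
  have hs1 : 1 ≤ s := by omega
  have h2s : 2 * s + 1 < n := by omega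
  set M := 2 * m * s with hM
  set jv : Fin M → ℕ := fun v => v.val / s % m with hjvdef
  set ev : Fin M → ℕ := fun v => v.val / s / m with hevdef
  have hjv : ∀ v, jv v < m := fun v => Nat.mod_lt _ hm1
  have hev : ∀ v : Fin M, ev v < 2 := by
    intro v
    have h1 : v.val / s < 2 * m := (Nat.div_lt_iff_lt_mul hs1).mpr (by
      have := v.isLt; omega)
    exact (Nat.div_lt_iff_lt_mul hm1).mpr (by omega)
  have hdm : ∀ v : Fin M, m * ev v + jv v = v.val / s := fun v => Nat.div_add_mod _ m
  have hds : ∀ v : Fin M, s * (v.val / s) + v.val % s = v.val := fun v => Nat.div_add_mod _ s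
  set cc : Fin M → Fin M → Fin k := fun u v =>
    if jv u = jv v then ⟨k - 1, by omega⟩
    else if ev u = ev v then ⟨min (jv u) (jv v), by have := hjv u; have := hjv v; omega⟩
    else ⟨max (jv u) (jv v), by have := hjv u; have := hjv v; omega⟩ with hcc
  have hcval : ∀ x y : Fin M, (cc x y).val =
      if jv x = jv y then k - 1
      else if ev x = ev y then min (jv x) (jv y) else max (jv x) (jv y) := by
    intro x y
    simp only [hcc]
    split_ifs <;> rfl
  have hsymm : ∀ u v, cc u v = cc v u := by
    intro u v
    have h1 := hcval u v
    have h2 := hcval v u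
    apply Fin.ext
    rw [h1, h2]
    split_ifs <;> omega
  refine ⟨Sym2.lift ⟨cc, hsymm⟩, ?_⟩
  rintro i ⟨u, v, p, hp, hlen⟩
  have hadj : ∀ x y : Fin M, (SimpleGraph.fromRel
      (fun a b => Sym2.lift ⟨cc, hsymm⟩ s(a, b) = i)).Adj x y → (cc x y).val = i.val := by
    intro x y h
    rw [fromRel_adj] at h
    simp only [Sym2.lift_mk] at h
    rcases h.2 with h' | h'
    · rw [h']
    · rw [hsymm]; rw [h']
  have hchain := p.isChain_adj_support
  have hnd := hp.support_nodup
  have humem := p.start_mem_support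
  rcases Nat.lt_or_ge i.val m with hi | hi
  · -- colour i < k-1 : double star
    set φ : Fin M → ℕ := fun x => if i.val ≤ jv x then ev x else 1 - ev x with hφ
    have hstep : ∀ x y : Fin M, (cc x y).val = i.val →
        φ x = φ y ∧ (jv x = i.val ∨ jv y = i.val) := by
      intro x y h
      rw [hcval x y] at h
      have hex := hev x; have hey := hev y
      have hjx := hjv x; have hjy := hjv y
      split_ifs at h with h1 h2
      · omega
      · exact ⟨by simp only [hφ]; split_ifs <;> omega, by omega⟩
      · exact ⟨by simp only [hφ]; split_ifs <;> omega, by omega⟩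
    have hchain2 : p.support.Chain' (fun x y => φ x = φ y) :=
      hchain.imp (fun {a b} h => (hstep a b (hadj a b h)).1)
    have hconst := chain'_const φ p.support hchain2
    set b₀ : ℕ := m * (φ u) + i.val with hb₀
    set S : Finset (Fin M) := Finset.univ.filter (fun v : Fin M => v.val / s = b₀) with hS
    have key : ∀ x ∈ p.support, jv x = i.val → x ∈ S := by
      intro x hx hjx
      have h1 : φ x = φ u := hconst x hx u humem
      have h2 : φ x = ev x := by simp only [hφ]; rw [if_pos (by omega)]
      have h3 := hdm x
      have h4 : ev x = φ u := by omega
      simp only [hS, Finset.mem_filter, Finset.mem_univ, true_and, hb₀]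
      rw [← h3, hjx, h4]
    have hchain3 : p.support.Chain' (fun x y => x ∈ S ∨ y ∈ S) := by
      refine chain'_imp_mem hchain ?_
      intro x hx y hy h
      rcases (hstep x y (hadj x y h)).2 with h' | h'
      · exact Or.inl (key x hx h')
      · exact Or.inr (key y hy h')
    have hbound := chain'_two_bound S p.support hnd hchain3
    have hScard : S.card ≤ s := by
      have h6 : S.card ≤ (Finset.univ : Finset (Fin s)).card := by
        refine Finset.card_le_card_of_injOn
          (fun v => ⟨v.val % s, Nat.mod_lt _ hs1⟩) (fun a _ => Finset.mem_univ _) ?_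
        intro a ha b hb hab
        simp only [hS, Finset.mem_coe, Finset.mem_filter, Finset.mem_univ, true_and] at ha hb
        have h7 : (a : Fin M).val % s = (b : Fin M).val % s := congrArg Fin.val hab
        have h8 : (a : Fin M).val / s = (b : Fin M).val / s := by omega
        have h4 := hds a; have h5 := hds b
        rw [h8] at h4
        exact Fin.ext (by omega)
      simpa using h6
    have hIcard : (p.support.toFinset ∩ S).card ≤ s :=
      le_trans (Finset.card_le_card (Finset.inter_subset_right)) hScard
    omega
  · -- colour k-1 : blocks and matching
    have hstep : ∀ x y : Fin M, (cc x y).val = i.val → jv x = jv y := by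
      intro x y h
      rw [hcval x y] at h
      have := i.isLt
      have hjx := hjv x; have hjy := hjv y
      split_ifs at h with h1 h2
      · exact h1
      · omega
      · omega
    have hchain2 : p.support.Chain' (fun x y => jv x = jv y) :=
      hchain.imp (fun {a b} h => hstep a b (hadj a b h))
    have hconst := chain'_const jv p.support hchain2
    set T : Finset (Fin M) := Finset.univ.filter (fun v : Fin M => jv v = jv u) with hT
    have hsub : p.support.toFinset ⊆ T := by
      intro x hx
      simp only [hT, Finset.mem_filter, Finset.mem_univ, true_and]
      exact hconst x (List.mem_toFinset.mp hx) u humem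
    have hTcard : T.card ≤ 2 * s := by
      have h6 : T.card ≤ (Finset.univ : Finset (Fin 2 × Fin s)).card := by
        refine Finset.card_le_card_of_injOn
          (fun v => (⟨ev v, hev v⟩, ⟨v.val % s, Nat.mod_lt _ hs1⟩))
          (fun a _ => Finset.mem_univ _) ?_
        intro a ha b hb hab
        simp only [hT, Finset.mem_coe, Finset.mem_filter, Finset.mem_univ, true_and] at ha hb
        have h1 : ev a = ev b := congrArg (fun q : Fin 2 × Fin s => q.1.val) hab
        have h2 : (a : Fin M).val % s = (b : Fin M).val % s :=
          congrArg (fun q : Fin 2 × Fin s => q.2.val) hab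
        have h3 := hdm a; have h4 := hdm b
        rw [h1] at h3
        have h8 : (a : Fin M).val / s = (b : Fin M).val / s := by omega
        have h5 := hds a; have h6 := hds b
        rw [h8] at h5
        exact Fin.ext (by omega)
      simpa using h6
    have hlen2 : p.support.length ≤ T.card := by
      rw [← List.toFinset_card_of_nodup hnd]
      exact Finset.card_le_card hsub
    omega

theorem ramsey_path_lower (k n : ℕ) (hk : 2 ≤ k) :
    (∃ f : Sym2 (Fin (2 * (k - 1) * (n / 2 - 1))) → Fin k,
      ∀ i : Fin k, ¬ ContainsPath (SimpleGraph.fromRel (fun u v => f s(u, v) = i)) n) ∧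
    (∀ N : ℕ,
      (∀ f : Sym2 (Fin N) → Fin k,
        ∃ i : Fin k, ContainsPath (SimpleGraph.fromRel (fun u v => f s(u, v) = i)) n) →
      2 * (k - 1) * (n / 2 - 1) + 1 ≤ N) := by
  refine ⟨no_mono_path k n hk, ?_⟩
  intro N hN
  by_contra hlt
  push_neg at hlt
  have hNM : N ≤ 2 * (k - 1) * (n / 2 - 1) := by omega
  obtain ⟨f, hf⟩ := no_mono_path k n hk
  set f' : Sym2 (Fin N) → Fin k := fun e => f (e.map (Fin.castLE hNM)) with hf'
  obtain ⟨i, u, v, p, hp, hlen⟩ := hN f'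
  have hrel : ∀ x y : Fin N, (fromRel fun a b => f' s(a, b) = i).Adj x y →
      (fromRel fun a b => f s(a, b) = i).Adj (Fin.castLE hNM x) (Fin.castLE hNM y) := by
    intro x y hxy
    rw [fromRel_adj] at hxy ⊢
    refine ⟨fun hc => hxy.1 (Fin.castLE_injective hNM hc), ?_⟩
    rcases hxy.2 with h | h
    · left; rw [← h, hf']; simp only [Sym2.map_pair_eq]
    · right; rw [← h, hf']; simp only [Sym2.map_pair_eq]
  let hom : (fromRel fun a b : Fin N => f' s(a, b) = i) →g
      (fromRel fun a b : Fin (2 * (k - 1) * (n / 2 - 1)) => f s(a, b) = i) :=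
    ⟨Fin.castLE hNM, fun {x y} h => hrel x y h⟩
  refine hf i ⟨Fin.castLE hNM u, Fin.castLE hNM v, p.map hom, ?_, ?_⟩
  · exact Walk.map_isPath_of_injective (Fin.castLE_injective hNM) hp
  · rw [Walk.support_map, List.length_map]; exact hlen
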